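/- Let ν₁, ν₂ be the Bernoulli product measures on {0,1}^T with marginal densities u₁ⁿ(x) = u(x) + κₙ u₁(x) and u₂ⁿ(x) = u(x) + κₙ u₂(x) respectively, where T is a finite set, κₙ → 0, and δ ≤ u(x) ≤ 1−δ for all x. Then the relative entropy satisfies H(ν₂|ν₁) = (κₙ²/2) Σ_x [u₂(x) − u₁(x)]²/χ(u(x)) + Rₙ, where χ(ρ) = ρ(1−ρ) and |Rₙ| ≤ C₀ κₙ³ |T| for a constant C₀ depending only on δ and the sup-norms of u₁, u₂. -/

import Mathlib

set_option maxHeartbeats 1000000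

open Finset

private lemma sum_fun_prod' {T : Type*} [Fintype T] [DecidableEq T] (f : T → Bool → ℝ) :
    ∑ η : T → Bool, ∏ x, f x (η x) = ∏ x, (f x false + f x true) := by
  rw [← Fintype.prod_sum]
  simp [Fintype.sum_bool, add_comm]

private lemma expectation' {T : Type*} [Fintype T] [DecidableEq T] (p : T → Bool → ℝ)
    (hp : ∀ y, p y false + p y true = 1) (x : T) (g : Bool → ℝ) :
    ∑ η : T → Bool, (∏ y, p y (η y)) * g (η x)
      = p x false * g false + p x true * g true := by
  have key : ∀ η : T → Bool, (∏ y, p y (η y)) * g (η x)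
      = ∏ y, (p y (η y) * (if y = x then g (η y) else 1)) := by
    intro η
    rw [Finset.prod_mul_distrib]
    congr 1
    simp
  simp_rw [key]
  rw [sum_fun_prod' (fun y c => p y c * (if y = x then g c else 1))]
  rw [Finset.prod_eq_single x (by intro y _ hy; simp [hy, hp y]) (by simp)]
  simp

private lemma rel_ent_factor' {T : Type*} [Fintype T] [DecidableEq T] (a b : T → ℝ)
    (ha : ∀ x, 0 < a x ∧ a x < 1) (hb : ∀ x, 0 < b x ∧ b x < 1) :
    ∑ η : T → Bool,
        (∏ x, (if η x then a x else 1 - a x)) *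
          Real.log ((∏ x, (if η x then a x else 1 - a x)) /
            (∏ x, (if η x then b x else 1 - b x)))
      = ∑ x, (a x * Real.log (a x / b x)
          + (1 - a x) * Real.log ((1 - a x) / (1 - b x))) := by
  have hapos : ∀ x (c : Bool), 0 < (if c then a x else 1 - a x) := by
    intro x c; cases c
    · simpa using by linarith [(ha x).2]
    · simpa using (ha x).1
  have hbpos : ∀ x (c : Bool), 0 < (if c then b x else 1 - b x) := by
    intro x c; cases c
    · simpa using by linarith [(hb x).2]
    · simpa using (hb x).1
  have hlog : ∀ η : T → Bool,
      Real.log ((∏ x, (if η x then a x else 1 - a x)) /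
        (∏ x, (if η x then b x else 1 - b x)))
      = ∑ x, Real.log ((if η x then a x else 1 - a x) / (if η x then b x else 1 - b x)) := by
    intro η
    rw [← Real.log_prod (fun x _ => ne_of_gt (div_pos (hapos x (η x)) (hbpos x (η x)))),
      Finset.prod_div_distrib]
  calc ∑ η : T → Bool,
        (∏ x, (if η x then a x else 1 - a x)) *
          Real.log ((∏ x, (if η x then a x else 1 - a x)) /
            (∏ x, (if η x then b x else 1 - b x)))
      = ∑ η : T → Bool, ∑ x, (∏ y, (if η y then a y else 1 - a y)) *
          Real.log ((if η x then a x else 1 - a x) / (if η x then b x else 1 - b x)) := by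
        refine Finset.sum_congr rfl fun η _ => ?_
        rw [hlog η, Finset.mul_sum]
    _ = ∑ x, ∑ η : T → Bool, (∏ y, (if η y then a y else 1 - a y)) *
          Real.log ((if η x then a x else 1 - a x) / (if η x then b x else 1 - b x)) :=
        Finset.sum_comm
    _ = _ := by
        refine Finset.sum_congr rfl fun x _ => ?_
        have := expectation' (fun y c => if c then a y else 1 - a y)
          (fun y => by simp) x
          (fun c => Real.log ((if c then a x else 1 - a x) / (if c then b x else 1 - b x)))
        simp only at this
        rw [this]
        simp [add_comm]

private lemma log_quad' (t : ℝ) (ht : |t| ≤ 1/2) :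
    |Real.log (1+t) - (t - t^2/2)| ≤ 2*|t|^3 := by
  have h := Real.abs_log_sub_add_sum_range_le (x := -t)
    (by rw [abs_neg]; linarith [abs_nonneg t]) 2
  simp only [Finset.sum_range_succ, Finset.sum_range_zero, abs_neg] at h
  push_cast at h
  have h1 : ((0:ℝ) + (-t)^(0+1)/(0+1) + (-t)^(1+1)/(1+1)) + Real.log (1 - -t)
      = Real.log (1+t) - (t - t^2/2) := by ring_nf
  rw [h1] at h
  have h2 : |t|^(2+1)/(1-|t|) ≤ 2*|t|^3 := by
    rw [div_le_iff₀ (by linarith [abs_nonneg t])]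
    have h3 : |t|^3 * (2 * (1 - |t|)) - |t|^(2+1) = |t|^3 * (1 - 2*|t|) := by ring
    nlinarith [mul_nonneg (pow_nonneg (abs_nonneg t) 3) (by linarith : (0:ℝ) ≤ 1 - 2*|t|)]
  linarith

private lemma bound3' (δ M κ s b : ℝ) (hδ : 0 < δ) (hM : 0 ≤ M) (hκ : 0 < κ)
    (hblo : δ/2 ≤ b) (hbhi : b ≤ 1 - δ/2) (hsabs : |s| ≤ 2*M*κ) :
    |(- (s^3/2*(1/b^2 - 1/(1-b)^2)))| ≤ 8*M^3*κ^3 * (4/δ^2) := by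
  have hbpos : 0 < b := by linarith
  have hb1pos : 0 < 1 - b := by linarith
  have hbsq : 1/b^2 ≤ 4/δ^2 := by
    rw [div_le_div_iff₀ (by positivity) (by positivity)]; nlinarith
  have hb1sq : 1/(1-b)^2 ≤ 4/δ^2 := by
    rw [div_le_div_iff₀ (by positivity) (by positivity)]; nlinarith
  have hs3 : |s|^3 ≤ 8*M^3*κ^3 := by
    calc |s|^3 ≤ (2*M*κ)^3 := pow_le_pow_left₀ (abs_nonneg s) hsabs 3
    _ = 8*M^3*κ^3 := by ring
  rw [abs_neg, abs_mul]
  have e1 : |s^3/2| = |s|^3/2 := by rw [abs_div, abs_pow]; norm_num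
  rw [e1]
  have e2 : |1/b^2 - 1/(1-b)^2| ≤ 8/δ^2 := by
    have hx1 : (0:ℝ) < 1/b^2 := by positivity
    have hx2 : (0:ℝ) < 1/(1-b)^2 := by positivity
    have hx4 : (4:ℝ)/δ^2 ≤ 8/δ^2 := by
      gcongr
      norm_num
    rw [abs_sub_le_iff]
    constructor <;> linarith
  calc |s|^3/2 * |1/b^2 - 1/(1-b)^2| ≤ (8*M^3*κ^3)/2 * (8/δ^2) := by
        apply mul_le_mul (by linarith) e2 (abs_nonneg _) (by positivity)
  _ = 8*M^3*κ^3 * (4/δ^2) := by ring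

private lemma bound4' (δ M κ w u b : ℝ) (hδ : 0 < δ) (hδ1 : δ ≤ 1/2) (hM : 0 ≤ M)
    (hκ : 0 < κ) (hblo : δ/2 ≤ b) (hbhi : b ≤ 1 - δ/2)
    (hu : δ ≤ u) (hu' : u ≤ 1 - δ)
    (hub : |u - b| ≤ κ*M) (hwabs : |w| ≤ 2*M) :
    |(κ*w)^2/(2*(b*(1-b))) - κ^2/2 * (w^2/(u*(1-u)))| ≤ (4*M^3*κ^3)/(δ^4/2) := by
  have hbpos : 0 < b := by linarith
  have hb1pos : 0 < 1 - b := by linarith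
  have hupos : 0 < u := by linarith
  have hu1pos : 0 < 1 - u := by linarith
  have hχid : (κ*w)^2/(2*(b*(1-b))) - κ^2/2 * (w^2/(u*(1-u)))
      = ((κ*w)^2*((u-b)*(1-u-b)))/(2*(b*(1-b))*(u*(1-u))) := by
    field_simp; ring
  have hbb : δ^2/4 ≤ b*(1-b) := by
    nlinarith [mul_nonneg (by linarith : (0:ℝ) ≤ b - δ/2) (by linarith : (0:ℝ) ≤ 1 - δ/2 - b)]
  have huu : δ^2 ≤ u*(1-u) := by
    nlinarith [mul_nonneg (by linarith : (0:ℝ) ≤ u - δ) (by linarith : (0:ℝ) ≤ 1 - δ - u)]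
  rw [hχid, abs_div]
  have hden : δ^4/2 ≤ |2*(b*(1-b))*(u*(1-u))| := by
    rw [abs_of_pos (by positivity)]
    nlinarith [mul_le_mul hbb huu (by positivity) (by positivity : (0:ℝ) ≤ b*(1-b))]
  have hnum : |(κ*w)^2*((u-b)*(1-u-b))| ≤ 4*M^3*κ^3 := by
    rw [abs_mul, abs_mul, abs_pow, abs_mul, abs_of_pos hκ]
    have h1ub : |1-u-b| ≤ 1 := by rw [abs_le]; constructor <;> linarith
    have hww : |w|^2 ≤ 4*M^2 := by nlinarith [abs_nonneg w]
    have hw2 : (κ*|w|)^2 ≤ 4*M^2*κ^2 := by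
      nlinarith [mul_nonneg (sq_nonneg κ) (sub_nonneg.mpr hww)]
    calc (κ*|w|)^2 * (|u-b| * |1-u-b|) ≤ (4*M^2*κ^2) * ((κ*M) * 1) := by
          apply mul_le_mul hw2 (mul_le_mul hub h1ub (abs_nonneg _) (by positivity))
            (mul_nonneg (abs_nonneg _) (abs_nonneg _)) (by positivity)
    _ ≤ 4*M^3*κ^3 := by nlinarith
  exact div_le_div₀ (by positivity) hnum (by positivity) hden

private lemma combine' (δ M κ : ℝ) (hδ : 0 < δ) (hδ1 : δ ≤ 1/2) (hM : 0 ≤ M) (hκ : 0 < κ) :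
    2*(4*M*κ/δ)^3 + 2*(4*M*κ/δ)^3 + 8*M^3*κ^3*(4/δ^2) + (4*M^3*κ^3)/(δ^4/2)
      ≤ (400*(M+1)^3/δ^4) * κ^3 := by
  rw [div_mul_eq_mul_div, le_div_iff₀ (by positivity : (0:ℝ) < δ^4)]
  have hexp : (2*(4*M*κ/δ)^3 + 2*(4*M*κ/δ)^3 + 8*M^3*κ^3*(4/δ^2) + (4*M^3*κ^3)/(δ^4/2))*δ^4
      = 256*M^3*κ^3*δ + 32*M^3*κ^3*δ^2 + 8*M^3*κ^3 := by
    field_simp; ring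
  rw [hexp]
  have hA : (0:ℝ) ≤ M^3*κ^3 := by positivity
  have h₁ : (0:ℝ) ≤ M^3*κ^3*(1/2-δ) := mul_nonneg hA (by linarith)
  have h₂ : (0:ℝ) ≤ M^3*κ^3*(1-δ^2) := mul_nonneg hA (by nlinarith)
  have h₃ : (0:ℝ) ≤ κ^3*((M+1)^3 - M^3) := mul_nonneg (by positivity) (by nlinarith)
  nlinarith [pow_pos hκ 3]

private lemma site' (δ M u u₁ u₂ κ : ℝ) (hδ : 0 < δ) (hu : δ ≤ u) (hu' : u ≤ 1 - δ)
    (h1 : |u₁| ≤ M) (h2 : |u₂| ≤ M) (hκ : 0 < κ) (hκ' : κ * (8*(M+1)) ≤ δ) :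
    |((u+κ*u₂) * Real.log ((u+κ*u₂)/(u+κ*u₁))
        + (1-(u+κ*u₂)) * Real.log ((1-(u+κ*u₂))/(1-(u+κ*u₁))))
      - κ^2/2 * ((u₂-u₁)^2/(u*(1-u)))| ≤ (400*(M+1)^3/δ^4) * κ^3 := by
  have hM : 0 ≤ M := le_trans (abs_nonneg _) h1
  have hδ1 : δ ≤ 1/2 := by linarith
  set a := u + κ*u₂ with ha
  set b := u + κ*u₁ with hb
  set s := κ*(u₂-u₁) with hs
  set w := u₂ - u₁ with hw
  have hκM : κ * M ≤ δ/8 := by nlinarith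
  have hκu₁ : |κ*u₁| ≤ δ/8 := by
    rw [abs_mul, abs_of_pos hκ]
    calc κ * |u₁| ≤ κ * M := mul_le_mul_of_nonneg_left h1 hκ.le
    _ ≤ δ/8 := hκM
  have hκu₂ : |κ*u₂| ≤ δ/8 := by
    rw [abs_mul, abs_of_pos hκ]
    calc κ * |u₂| ≤ κ * M := mul_le_mul_of_nonneg_left h2 hκ.le
    _ ≤ δ/8 := hκM
  have habs1 := abs_le.mp hκu₁
  have habs2 := abs_le.mp hκu₂
  have hblo : δ/2 ≤ b := by simp only [hb]; linarith [habs1.1]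
  have hbhi : b ≤ 1 - δ/2 := by simp only [hb]; linarith [habs1.2]
  have halo : δ/2 ≤ a := by simp only [ha]; linarith [habs2.1]
  have hahi : a ≤ 1 - δ/2 := by simp only [ha]; linarith [habs2.2]
  have hbpos : 0 < b := by linarith
  have hb1pos : 0 < 1 - b := by linarith
  have hapos : 0 < a := by linarith
  have ha1pos : 0 < 1 - a := by linarith
  have hwabs : |w| ≤ 2*M := by
    calc |w| = |u₂ - u₁| := rfl
    _ ≤ |u₂| + |u₁| := abs_sub _ _
    _ ≤ 2*M := by linarith
  have hsabs : |s| ≤ 2*M*κ := by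
    rw [hs, abs_mul, abs_of_pos hκ]
    calc κ * |u₂ - u₁| ≤ κ * (2*M) := mul_le_mul_of_nonneg_left (by rw [← hw]; exact hwabs) hκ.le
    _ = 2*M*κ := by ring
  have hsδ : |s| ≤ δ/4 := by nlinarith
  set p := s/b with hp
  set q := s/(1-b) with hq
  have hpabs : |p| ≤ 1/2 := by
    rw [hp, abs_div, abs_of_pos hbpos, div_le_iff₀ hbpos]
    linarith
  have hqabs : |q| ≤ 1/2 := by
    rw [hq, abs_div, abs_of_pos hb1pos, div_le_iff₀ hb1pos]
    linarith
  have hp2 : |p| ≤ 2*|s|/δ := by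
    rw [hp, abs_div, abs_of_pos hbpos, div_le_div_iff₀ hbpos hδ]
    nlinarith [abs_nonneg s]
  have hq2 : |q| ≤ 2*|s|/δ := by
    rw [hq, abs_div, abs_of_pos hb1pos, div_le_div_iff₀ hb1pos hδ]
    nlinarith [abs_nonneg s]
  have hple : |p| ≤ 4*M*κ/δ := by
    refine hp2.trans ?_
    rw [div_le_div_iff₀ hδ hδ]
    nlinarith [abs_nonneg s]
  have hqle : |q| ≤ 2*|s|/δ := hq2
  have hqle' : |q| ≤ 4*M*κ/δ := by
    refine hq2.trans ?_
    rw [div_le_div_iff₀ hδ hδ]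
    nlinarith [abs_nonneg s]
  have hub : |u - b| ≤ κ*M := by
    have he : u - b = -(κ*u₁) := by rw [hb]; ring
    rw [he, abs_neg, abs_mul, abs_of_pos hκ]
    exact mul_le_mul_of_nonneg_left h1 hκ.le
  have hab : a = b + s := by rw [ha, hb, hs]; ring
  have hratio1 : a/b = 1 + p := by rw [hab, hp]; field_simp
  have hratio2 : (1-a)/(1-b) = 1 + (-q) := by
    rw [hab, hq]; field_simp; ring
  have hE1 := log_quad' p hpabs
  have hE2 := log_quad' (-q) (by rwa [abs_neg])
  set E₁ := Real.log (1+p) - (p - p^2/2) with hE1d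
  set E₂ := Real.log (1+(-q)) - ((-q) - (-q)^2/2) with hE2d
  have hid : a*(p - p^2/2) + (1-a)*((-q) - (-q)^2/2)
      = s^2/(2*(b*(1-b))) - s^3/2*(1/b^2 - 1/(1-b)^2) := by
    rw [hab, hp, hq]
    field_simp
    ring
  have hdecomp : (a * Real.log (a/b) + (1-a) * Real.log ((1-a)/(1-b)))
      - κ^2/2 * (w^2/(u*(1-u)))
      = a*E₁ + (1-a)*E₂
        + (- (s^3/2*(1/b^2 - 1/(1-b)^2)))
        + (s^2/(2*(b*(1-b))) - κ^2/2 * (w^2/(u*(1-u)))) := by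
    rw [hratio1, hratio2, hE1d, hE2d]
    linarith [hid]
  rw [hdecomp]
  -- individual bounds
  have hqle := hqle'
  have hp3 : |p|^3 ≤ (4*M*κ/δ)^3 := pow_le_pow_left₀ (abs_nonneg p) hple 3
  have hq3 : |q|^3 ≤ (4*M*κ/δ)^3 := pow_le_pow_left₀ (abs_nonneg q) hqle 3
  have haabs : |a| ≤ 1 := by rw [abs_of_pos hapos]; linarith
  have ha1abs : |1-a| ≤ 1 := by rw [abs_of_pos ha1pos]; linarith
  have hB1 : |a*E₁| ≤ 2*(4*M*κ/δ)^3 := by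
    calc |a*E₁| = |a| * |E₁| := abs_mul _ _
    _ ≤ 1 * (2*|p|^3) := mul_le_mul haabs hE1 (abs_nonneg _) one_pos.le
    _ ≤ 2*(4*M*κ/δ)^3 := by linarith
  have hB2 : |(1-a)*E₂| ≤ 2*(4*M*κ/δ)^3 := by
    calc |(1-a)*E₂| = |1-a| * |E₂| := abs_mul _ _
    _ ≤ 1 * (2*|q|^3) := by
        refine mul_le_mul ha1abs ?_ (abs_nonneg _) one_pos.le
        calc |E₂| ≤ 2*|-q|^3 := hE2
        _ = 2*|q|^3 := by rw [abs_neg]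
    _ ≤ 2*(4*M*κ/δ)^3 := by linarith
  have hB3 := bound3' δ M κ s b hδ hM hκ hblo hbhi hsabs
  have hB4' := bound4' δ M κ w u b hδ hδ1 hM hκ hblo hbhi hu hu' hub hwabs
  have hsw : s^2 = (κ*w)^2 := by rw [hs, hw]
  have hB4 : |s^2/(2*(b*(1-b))) - κ^2/2 * (w^2/(u*(1-u)))| ≤ (4*M^3*κ^3)/(δ^4/2) := by
    rw [hsw]; exact hB4'
  have htri := abs_add_le (a*E₁ + (1-a)*E₂ + (- (s^3/2*(1/b^2 - 1/(1-b)^2))))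
      (s^2/(2*(b*(1-b))) - κ^2/2 * (w^2/(u*(1-u))))
  have htri1 := abs_add_le (a*E₁ + (1-a)*E₂) (- (s^3/2*(1/b^2 - 1/(1-b)^2)))
  have htri2 := abs_add_le (a*E₁) ((1-a)*E₂)
  have hcomb := combine' δ M κ hδ hδ1 hM hκ
  linarith

/-- Relative entropy between two small perturbations of a
product Bernoulli measure. -/
theorem stmt1 {T : Type*} [Fintype T] [DecidableEq T]
    (δ M : ℝ) (hδ : 0 < δ)
    (u u₁ u₂ : T → ℝ) (κ : ℕ → ℝ)
    (hu : ∀ x, δ ≤ u x ∧ u x ≤ 1 - δ)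
    (hu₁ : ∀ x, |u₁ x| ≤ M) (hu₂ : ∀ x, |u₂ x| ≤ M)
    (hκpos : ∀ n, 0 < κ n)
    (hκ : Filter.Tendsto κ Filter.atTop (nhds 0))
    (hrange : ∀ n x, (0 < u x + κ n * u₁ x ∧ u x + κ n * u₁ x < 1) ∧
                     (0 < u x + κ n * u₂ x ∧ u x + κ n * u₂ x < 1)) :
    ∃ C₀ : ℝ, 0 < C₀ ∧ ∀ n : ℕ,
      |(∑ η : T → Bool,
          (∏ x, (if η x then u x + κ n * u₂ x else 1 - (u x + κ n * u₂ x))) *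
            Real.log ((∏ x, (if η x then u x + κ n * u₂ x else 1 - (u x + κ n * u₂ x))) /
              (∏ x, (if η x then u x + κ n * u₁ x else 1 - (u x + κ n * u₁ x)))))
        - (κ n) ^ 2 / 2 * ∑ x, (u₂ x - u₁ x) ^ 2 / (u x * (1 - u x))|
      ≤ C₀ * (κ n) ^ 3 * (Fintype.card T) := by
  by_cases hT : Nonempty T
  case neg =>
    haveI : IsEmpty T := not_nonempty_iff.mp hT
    refine ⟨1, one_pos, fun n => ?_⟩
    simp
  obtain ⟨x₀⟩ := hT
  haveI : Nonempty T := ⟨x₀⟩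
  have hM : 0 ≤ M := le_trans (abs_nonneg _) (hu₁ x₀)
  have hcard : 0 < (Fintype.card T : ℝ) := by
    exact_mod_cast Fintype.card_pos
  set C₁ := 400*(M+1)^3/δ^4 with hC₁def
  have hC₁pos : 0 < C₁ := by positivity
  have hgood : ∀ n, κ n * (8*(M+1)) ≤ δ →
      |(∑ η : T → Bool,
          (∏ x, (if η x then u x + κ n * u₂ x else 1 - (u x + κ n * u₂ x))) *
            Real.log ((∏ x, (if η x then u x + κ n * u₂ x else 1 - (u x + κ n * u₂ x))) /
              (∏ x, (if η x then u x + κ n * u₁ x else 1 - (u x + κ n * u₁ x)))))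
        - (κ n) ^ 2 / 2 * ∑ x, (u₂ x - u₁ x) ^ 2 / (u x * (1 - u x))|
      ≤ C₁ * (κ n) ^ 3 * (Fintype.card T) := by
    intro n hn
    rw [rel_ent_factor' (fun x => u x + κ n * u₂ x) (fun x => u x + κ n * u₁ x)
      (fun x => (hrange n x).2) (fun x => (hrange n x).1)]
    rw [Finset.mul_sum, ← Finset.sum_sub_distrib]
    calc |∑ x, (((u x + κ n * u₂ x) * Real.log ((u x + κ n * u₂ x) / (u x + κ n * u₁ x))
            + (1 - (u x + κ n * u₂ x)) *
              Real.log ((1 - (u x + κ n * u₂ x)) / (1 - (u x + κ n * u₁ x))))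
          - (κ n)^2/2 * ((u₂ x - u₁ x)^2 / (u x * (1 - u x))))|
        ≤ ∑ x, |(((u x + κ n * u₂ x) * Real.log ((u x + κ n * u₂ x) / (u x + κ n * u₁ x))
            + (1 - (u x + κ n * u₂ x)) *
              Real.log ((1 - (u x + κ n * u₂ x)) / (1 - (u x + κ n * u₁ x))))
          - (κ n)^2/2 * ((u₂ x - u₁ x)^2 / (u x * (1 - u x))))| :=
          Finset.abs_sum_le_sum_abs _ _
      _ ≤ ∑ _x : T, C₁ * (κ n)^3 := by
          refine Finset.sum_le_sum fun x _ => ?_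
          exact site' δ M (u x) (u₁ x) (u₂ x) (κ n) hδ (hu x).1 (hu x).2
            (hu₁ x) (hu₂ x) (hκpos n) hn
      _ = C₁ * (κ n)^3 * (Fintype.card T) := by
          rw [Finset.sum_const, Finset.card_univ, nsmul_eq_mul]
          ring
  obtain ⟨N, hN⟩ := Metric.tendsto_atTop.mp hκ (δ/(8*(M+1))) (by positivity)
  have hNκ : ∀ n, N ≤ n → κ n * (8*(M+1)) ≤ δ := by
    intro n hn
    have := hN n hn
    rw [Real.dist_eq, sub_zero, abs_of_pos (hκpos n)] at this
    exact le_of_lt ((lt_div_iff₀ (by positivity : (0:ℝ) < 8*(M+1))).mp this)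
  classical
  set Sm : ℕ → ℝ := fun m =>
      |(∑ η : T → Bool,
          (∏ x, (if η x then u x + κ m * u₂ x else 1 - (u x + κ m * u₂ x))) *
            Real.log ((∏ x, (if η x then u x + κ m * u₂ x else 1 - (u x + κ m * u₂ x))) /
              (∏ x, (if η x then u x + κ m * u₁ x else 1 - (u x + κ m * u₁ x)))))
        - (κ m) ^ 2 / 2 * ∑ x, (u₂ x - u₁ x) ^ 2 / (u x * (1 - u x))| with hSm
  have hSmnonneg : ∀ m, 0 ≤ Sm m := fun m => abs_nonneg _
  refine ⟨C₁ + 1 + ∑ m ∈ Finset.range N, Sm m / ((κ m)^3 * (Fintype.card T : ℝ)), ?_, ?_⟩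
  · have : 0 ≤ ∑ m ∈ Finset.range N, Sm m / ((κ m)^3 * (Fintype.card T : ℝ)) :=
      Finset.sum_nonneg fun m _ => div_nonneg (hSmnonneg m)
        (by have := hκpos m; positivity)
    linarith
  intro n
  have hsum_nonneg : 0 ≤ ∑ m ∈ Finset.range N, Sm m / ((κ m)^3 * (Fintype.card T : ℝ)) :=
    Finset.sum_nonneg fun m _ => div_nonneg (hSmnonneg m) (by have := hκpos m; positivity)
  have hgoal : Sm n ≤ (C₁ + 1 + ∑ m ∈ Finset.range N, Sm m / ((κ m)^3 * (Fintype.card T : ℝ)))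
      * (κ n)^3 * (Fintype.card T : ℝ) := by
    by_cases hn : N ≤ n
    · have h1 : Sm n ≤ C₁ * (κ n)^3 * (Fintype.card T) := hgood n (hNκ n hn)
      have h2 : C₁ * (κ n)^3 * (Fintype.card T : ℝ)
          ≤ (C₁ + 1 + ∑ m ∈ Finset.range N, Sm m / ((κ m)^3 * (Fintype.card T : ℝ)))
            * (κ n)^3 * (Fintype.card T : ℝ) := by
        have hκ3 : (0:ℝ) ≤ (κ n)^3 := (pow_pos (hκpos n) 3).le
        have : C₁ ≤ C₁ + 1 + ∑ m ∈ Finset.range N, Sm m / ((κ m)^3 * (Fintype.card T : ℝ)) := by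
          linarith
        exact mul_le_mul_of_nonneg_right
          (mul_le_mul_of_nonneg_right this hκ3) hcard.le
      linarith
    · push_neg at hn
      have hpos : (0:ℝ) < (κ n)^3 * (Fintype.card T : ℝ) := by
        have := pow_pos (hκpos n) 3
        positivity
      have hterm : Sm n / ((κ n)^3 * (Fintype.card T : ℝ))
          ≤ ∑ m ∈ Finset.range N, Sm m / ((κ m)^3 * (Fintype.card T : ℝ)) :=
        Finset.single_le_sum (f := fun m => Sm m / ((κ m)^3 * (Fintype.card T : ℝ)))
          (fun m _ => div_nonneg (hSmnonneg m) (by have := hκpos m; positivity))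
          (Finset.mem_range.mpr hn)
      have hC : Sm n / ((κ n)^3 * (Fintype.card T : ℝ))
          ≤ C₁ + 1 + ∑ m ∈ Finset.range N, Sm m / ((κ m)^3 * (Fintype.card T : ℝ)) := by
        linarith
      have := (div_le_iff₀ hpos).mp hC
      calc Sm n ≤ (C₁ + 1 + ∑ m ∈ Finset.range N, Sm m / ((κ m)^3 * (Fintype.card T : ℝ)))
          * ((κ n)^3 * (Fintype.card T : ℝ)) := this
        _ = _ := by ring
  exact hgoal
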